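/- Let n ≥ 4 be an integer. Then ∫_{ℝ^{n−1}} ( ȳ·∇_{ȳ}U(ȳ,0) + ((n−2)/2)U(ȳ,0) ) U(ȳ,0) dȳ = ((n−2)/2) ∫_{ℝ^{n−1}} (1−|ȳ|²)/(1+|ȳ|²)^{n−1} dȳ = −((n−2)/(n−1)) ω_{n−2} I_{n−1}^n; in particular this integral is finite and strictly negative. -/

import Mathlib

open MeasureTheory Set Metric

/-- `I m α = ∫_0^∞ s^α / (1+s²)^m ds`. -/
noncomputable def paperI (m α : ℝ) : ℝ := ∫ s in Ioi (0 : ℝ), s ^ α / (1 + s ^ 2) ^ m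

/-- `ω k`: the `k`-dimensional surface measure of the unit sphere `S^k ⊂ ℝ^{k+1}`,
namely `(k+1)` times the volume of the unit ball of `ℝ^{k+1}`. -/
noncomputable def sphereVol (k : ℕ) : ℝ :=
  ((k : ℝ) + 1) * (volume (ball (0 : EuclideanSpace ℝ (Fin (k + 1))) 1)).toReal

/-- The trace of the standard bubble on the boundary:
`U(ȳ,0) = (1+|ȳ|²)^{-(n-2)/2}` as a function of `ȳ ∈ ℝ^{n-1}`. -/
noncomputable def bubbleTrace (n : ℕ) (z : EuclideanSpace ℝ (Fin (n - 1))) : ℝ :=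
  (1 + ‖z‖ ^ 2) ^ (-(((n : ℝ) - 2) / 2))


set_option linter.unnecessarySeqFocus false
set_option linter.unusedVariables false


lemma intAux (k d : ℕ) (hkd : k + 2 ≤ 2 * d) :
    IntegrableOn (fun r : ℝ => r ^ k / (1 + r ^ 2) ^ d) (Ioi 0) := by
  have hc : Continuous fun r : ℝ => r ^ k / (1 + r ^ 2) ^ d := by
    apply Continuous.div (by fun_prop) (by fun_prop)
    intro x; positivity
  rw [show Ioi (0:ℝ) = Ioc 0 1 ∪ Ioi 1 from (Ioc_union_Ioi_eq_Ioi zero_le_one).symm]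
  apply IntegrableOn.union
  · exact hc.integrableOn_Ioc
  · have hint : IntegrableOn (fun r : ℝ => r ^ ((k:ℝ) - 2*d)) (Ioi 1) :=
      integrableOn_Ioi_rpow_of_lt (by
        have : (k:ℝ) + 2 ≤ 2 * d := by exact_mod_cast hkd
        linarith) zero_lt_one
    apply hint.mono' (hc.aestronglyMeasurable.restrict)
    filter_upwards [ae_restrict_mem measurableSet_Ioi] with x hx
    have hx1 : (1:ℝ) < x := hx
    have hx0 : (0:ℝ) < x := lt_trans zero_lt_one hx1
    rw [Real.norm_eq_abs, abs_of_nonneg (by positivity)]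
    have h1 : x ^ k / (1 + x ^ 2) ^ d ≤ x ^ k / (x ^ 2) ^ d := by
      gcongr <;> linarith
    refine h1.trans_eq ?_
    rw [← pow_mul, Real.rpow_sub hx0, Real.rpow_natCast]
    rw [show (2 * (d:ℝ)) = ((2 * d : ℕ) : ℝ) by push_cast; ring, Real.rpow_natCast]

lemma ftcAux (d : ℕ) (hd : 3 ≤ d) :
    (d : ℝ) * (∫ r in Ioi (0:ℝ), r ^ (d-1) * ((1 - r^2)/(1+r^2)^d))
      = -2 * ∫ r in Ioi (0:ℝ), r ^ (d+1) / (1+r^2)^d := by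
  obtain ⟨e, rfl⟩ : ∃ e, d = e + 3 := ⟨d - 3, by omega⟩
  set F : ℝ → ℝ := fun r => r ^ (e+3) / (1+r^2) ^ (e+2) with hF
  set F' : ℝ → ℝ := fun r =>
    (e+3 : ℝ) * (r ^ (e+2) * ((1 - r^2)/(1+r^2)^(e+3))) + 2 * (r ^ (e+4) / (1+r^2)^(e+3)) with hF'
  have hb : ∀ r : ℝ, (0:ℝ) < 1 + r ^ 2 := fun r => by positivity
  have hder : ∀ r : ℝ, HasDerivAt F (F' r) r := by
    intro r
    have h1 : HasDerivAt (fun r : ℝ => r ^ (e+3)) ((e+3 : ℝ) * r ^ (e+2)) r := by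
      simpa using hasDerivAt_pow (e+3) r
    have h2 : HasDerivAt (fun r : ℝ => (1+r^2) ^ (e+2)) ((e+2 : ℝ) * (1+r^2) ^ (e+1) * (2*r)) r := by
      have hin : HasDerivAt (fun r : ℝ => 1 + r^2) (2*r) r := by
        simpa using ((hasDerivAt_pow 2 r).const_add 1)
      simpa using (HasDerivAt.fun_pow hin (e+2))
    have := h1.fun_div h2 (by positivity)
    refine this.congr_deriv ?_
    have hbne : (1 + r^2) ≠ 0 := (hb r).ne'
    rw [hF']
    field_simp
    ring
  have htend : Filter.Tendsto F Filter.atTop (nhds 0) := by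
    apply squeeze_zero_norm' ?_ tendsto_inv_atTop_zero
    filter_upwards [Filter.eventually_ge_atTop (1:ℝ)] with x hx1
    have hx0 : (0:ℝ) < x := lt_of_lt_of_le zero_lt_one hx1
    rw [Real.norm_eq_abs, abs_of_nonneg (by positivity)]
    have h1 : x ^ (e+3) / (1+x^2) ^ (e+2) ≤ x ^ (e+3) / (x^2) ^ (e+2) := by
      gcongr <;> linarith
    refine h1.trans ?_
    rw [← pow_mul, div_le_iff₀ (by positivity)]
    have hxe : x⁻¹ * x ^ (2*(e+2)) = x ^ (2*e+3) := by
      rw [show 2*(e+2) = (2*e+3)+1 by ring, pow_succ]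
      field_simp
    rw [hxe]
    exact pow_le_pow_right₀ hx1 (by omega)
  have hi1 : IntegrableOn (fun r : ℝ => r ^ (e+2) * ((1 - r^2)/(1+r^2)^(e+3))) (Ioi (0:ℝ)) := by
    have h1 := intAux (e+2) (e+3) (by omega)
    have h2 := intAux (e+4) (e+3) (by omega)
    apply (h1.sub h2).congr
    filter_upwards [ae_restrict_mem measurableSet_Ioi] with x _
    simp only [Pi.sub_apply]
    field_simp
    ring
  have hi2 : IntegrableOn (fun r : ℝ => r ^ (e+4) / (1+r^2)^(e+3)) (Ioi (0:ℝ)) :=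
    intAux (e+4) (e+3) (by omega)
  have hFint : IntegrableOn F' (Ioi (0:ℝ)) := by
    exact (hi1.const_mul _).add (hi2.const_mul _)
  have h0 : (∫ r in Ioi (0:ℝ), F' r) = 0 - F 0 := by
    exact integral_Ioi_of_hasDerivAt_of_tendsto' (fun x _ => hder x) hFint htend
  have hF0 : F 0 = 0 := by simp [hF]
  rw [hF0, sub_zero] at h0
  rw [hF', integral_add ((hi1.const_mul _)) ((hi2.const_mul _)),
    integral_const_mul, integral_const_mul] at h0
  push_cast
  simp only [show e + 3 - 1 = e + 2 from rfl, show e + 3 + 1 = e + 4 from rfl]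
  linarith

lemma Bpos (d : ℕ) (hd : 3 ≤ d) : 0 < ∫ r in Ioi (0:ℝ), r ^ (d+1) / (1+r^2)^d := by
  rw [setIntegral_pos_iff_support_of_nonneg_ae ?_ (intAux (d+1) d (by omega))]
  · refine lt_of_lt_of_le ?_ (measure_mono (show Ioi (0:ℝ) ⊆ _ from ?_))
    · rw [Real.volume_Ioi]; exact ENNReal.zero_lt_top
    · intro x hx
      have hx0 : (0:ℝ) < x := hx
      exact ⟨by simp only [Function.mem_support]; positivity, hx⟩
  · filter_upwards [ae_restrict_mem measurableSet_Ioi] with x hx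
    have hx0 : (0:ℝ) < x := hx
    positivity

lemma keyAux (n : ℕ) :
    ∀ z : EuclideanSpace ℝ (Fin (n-1)),
      (fderiv ℝ (bubbleTrace n) z z + ((n:ℝ)-2)/2 * bubbleTrace n z) * bubbleTrace n z
      = ((n:ℝ)-2)/2 * ((1 - ‖z‖^2)/(1+‖z‖^2)^((n:ℝ)-1)) := by
  have hb : ∀ z : EuclideanSpace ℝ (Fin (n-1)), (0:ℝ) < 1 + ‖z‖^2 := fun z => by positivity
  intro z
  have hbz := hb z
  have hderiv :
      HasFDerivAt (bubbleTrace n)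
        (((-(((n:ℝ)-2)/2)) * (1+‖z‖^2) ^ ((-(((n:ℝ)-2)/2)) - 1)) • (2 • (innerSL ℝ z))) z := by
    have h1 : HasFDerivAt (fun z : EuclideanSpace ℝ (Fin (n-1)) => 1 + ‖z‖^2)
        (2 • (innerSL ℝ z)) z := (hasStrictFDerivAt_norm_sq z).hasFDerivAt.const_add 1
    exact h1.rpow_const (Or.inl hbz.ne')
  rw [hderiv.fderiv]
  simp only [ContinuousLinearMap.smul_apply, innerSL_apply_apply, smul_eq_mul, nsmul_eq_mul, Nat.cast_ofNat]
  rw [real_inner_self_eq_norm_sq]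
  unfold bubbleTrace
  set c := ((n:ℝ)-2) with hc
  set t := ‖z‖^2 with ht
  have hbt : (0:ℝ) < 1 + t := hbz
  have e1 : (1+t) ^ (-(c/2) - 1) * (1+t) ^ (-(c/2)) = (1+t) ^ (-(c+1)) := by
    rw [← Real.rpow_add hbt]; congr 1; ring
  have e2 : (1+t) ^ (-(c/2)) * (1+t) ^ (-(c/2)) = (1+t) * (1+t) ^ (-(c+1)) := by
    rw [← Real.rpow_add hbt, show -(c/2) + -(c/2) = 1 + -(c+1) by ring,
      Real.rpow_add hbt, Real.rpow_one]
  have hNc : (n:ℝ) - 1 = c + 1 := by rw [hc]; ring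
  have hS : (1+t) ^ (-(c+1)) = ((1+t)^(c+1))⁻¹ := Real.rpow_neg hbt.le _
  have hQ : (0:ℝ) < (1+t)^(c+1) := Real.rpow_pos_of_pos hbt _
  have expand : ((-(c/2)) * (1+t) ^ ((-(c/2)) - 1) * (2 * t) + c/2 * (1+t) ^ (-(c/2)))
        * (1+t) ^ (-(c/2))
      = (-(c*t)) * ((1+t) ^ (-(c/2) - 1) * (1+t) ^ (-(c/2)))
        + (c/2) * ((1+t) ^ (-(c/2)) * (1+t) ^ (-(c/2))) := by ring
  rw [hNc, expand, e1, e2, hS]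
  field_simp
  ring

theorem stmt12 (n : ℕ) (hn : 4 ≤ n) :
    Integrable (fun z : EuclideanSpace ℝ (Fin (n - 1)) =>
        (fderiv ℝ (bubbleTrace n) z z + ((n : ℝ) - 2) / 2 * bubbleTrace n z) *
          bubbleTrace n z) ∧
    (∫ z : EuclideanSpace ℝ (Fin (n - 1)),
        (fderiv ℝ (bubbleTrace n) z z + ((n : ℝ) - 2) / 2 * bubbleTrace n z) *
          bubbleTrace n z) =
      ((n : ℝ) - 2) / 2 *
        ∫ z : EuclideanSpace ℝ (Fin (n - 1)),
          (1 - ‖z‖ ^ 2) / (1 + ‖z‖ ^ 2) ^ ((n : ℝ) - 1) ∧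
    (∫ z : EuclideanSpace ℝ (Fin (n - 1)),
        (fderiv ℝ (bubbleTrace n) z z + ((n : ℝ) - 2) / 2 * bubbleTrace n z) *
          bubbleTrace n z) =
      -(((n : ℝ) - 2) / ((n : ℝ) - 1)) * sphereVol (n - 2) * paperI ((n : ℝ) - 1) n ∧
    (∫ z : EuclideanSpace ℝ (Fin (n - 1)),
        (fderiv ℝ (bubbleTrace n) z z + ((n : ℝ) - 2) / 2 * bubbleTrace n z) *
          bubbleTrace n z) < 0 := by
  have key := keyAux n
  have hb : ∀ z : EuclideanSpace ℝ (Fin (n-1)), (0:ℝ) < 1 + ‖z‖^2 := fun z => by positivity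
  have hN4 : (4:ℝ) ≤ (n:ℝ) := by exact_mod_cast hn
  have hNat : ((n-1:ℕ):ℝ) = (n:ℝ) - 1 := by
    rw [Nat.cast_sub (by omega)]; norm_num
  have hfun : (fun z : EuclideanSpace ℝ (Fin (n - 1)) =>
        (fderiv ℝ (bubbleTrace n) z z + ((n : ℝ) - 2) / 2 * bubbleTrace n z) *
          bubbleTrace n z)
      = fun z => ((n:ℝ)-2)/2 * ((1 - ‖z‖^2)/(1+‖z‖^2)^((n:ℝ)-1)) := funext key
  -- continuity and integrability of the simplified integrand
  have hcont2 : Continuous (fun z : EuclideanSpace ℝ (Fin (n-1)) =>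
      (1 - ‖z‖^2)/(1+‖z‖^2)^((n:ℝ)-1)) := by
    apply Continuous.div (by fun_prop)
    · apply Continuous.rpow_const (by fun_prop)
      intro z; exact Or.inl (hb z).ne'
    · intro z; exact (Real.rpow_pos_of_pos (hb z) _).ne'
  have hint2 : Integrable (fun z : EuclideanSpace ℝ (Fin (n-1)) =>
      (1 - ‖z‖^2)/(1+‖z‖^2)^((n:ℝ)-1)) := by
    have hr : (Module.finrank ℝ (EuclideanSpace ℝ (Fin (n-1))) : ℝ) < 2*((n:ℝ)-2) := by
      rw [finrank_euclideanSpace_fin, hNat]; linarith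
    refine (integrable_rpow_neg_one_add_norm_sq hr).mono' hcont2.aestronglyMeasurable ?_
    refine Filter.Eventually.of_forall fun z => ?_
    have hbz := hb z
    rw [Real.norm_eq_abs, abs_div, abs_of_pos (Real.rpow_pos_of_pos hbz _)]
    have h1 : |1 - ‖z‖^2| ≤ 1 + ‖z‖^2 := by
      rw [abs_le]; constructor <;> nlinarith [sq_nonneg ‖z‖]
    calc |1 - ‖z‖^2| / (1+‖z‖^2) ^ ((n:ℝ)-1) ≤ (1+‖z‖^2) / (1+‖z‖^2) ^ ((n:ℝ)-1) := by gcongr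
      _ = (1+‖z‖^2) ^ (-(2*((n:ℝ)-2))/2) := by
          rw [show (-(2*((n:ℝ)-2)))/2 = 1 - ((n:ℝ)-1) by ring, Real.rpow_sub hbz 1 ((n:ℝ)-1),
            Real.rpow_one]
  -- polar coordinates
  haveI : Nontrivial (EuclideanSpace ℝ (Fin (n-1))) := by
    apply Module.nontrivial_of_finrank_pos (R := ℝ)
    rw [finrank_euclideanSpace_fin]; omega
  have hpolar := integral_fun_norm_addHaar (volume : Measure (EuclideanSpace ℝ (Fin (n-1))))
      (fun r : ℝ => (1 - r^2)/(1+r^2)^((n:ℝ)-1))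
  rw [finrank_euclideanSpace_fin] at hpolar
  have hpow : ∀ y : ℝ, (1+y^2) ^ ((n:ℝ)-1) = (1+y^2) ^ (n-1 : ℕ) := fun y => by
    rw [← hNat, Real.rpow_natCast]
  -- identify the radial integral
  have hrad : (∫ y in Ioi (0:ℝ), y ^ (n-1-1) • ((1 - y^2)/(1+y^2)^((n:ℝ)-1)))
      = ∫ r in Ioi (0:ℝ), r ^ ((n-1)-1) * ((1 - r^2)/(1+r^2)^(n-1:ℕ)) := by
    apply setIntegral_congr_fun measurableSet_Ioi
    intro y _
    simp only [smul_eq_mul, hpow]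
  have hpI : paperI ((n:ℝ)-1) n = ∫ s in Ioi (0:ℝ), s ^ ((n-1:ℕ)+1) / (1+s^2)^(n-1:ℕ) := by
    unfold paperI
    apply setIntegral_congr_fun measurableSet_Ioi
    intro s _
    simp only [hpow]
    rw [show (n-1:ℕ)+1 = n from by omega, Real.rpow_natCast]
  set V : ℝ := (volume (ball (0 : EuclideanSpace ℝ (Fin (n-1))) 1)).toReal with hV
  have hVpos : 0 < V := by
    rw [hV]
    exact ENNReal.toReal_pos (measure_ball_pos volume 0 one_pos).ne' measure_ball_lt_top.ne
  set J : ℝ := ∫ r in Ioi (0:ℝ), r ^ ((n-1)-1) * ((1 - r^2)/(1+r^2)^(n-1:ℕ)) with hJ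
  set B : ℝ := ∫ r in Ioi (0:ℝ), r ^ ((n-1)+1) / (1+r^2)^(n-1:ℕ) with hB
  have hftc : ((n-1:ℕ):ℝ) * J = -2 * B := ftcAux (n-1) (by omega)
  have hBpos : 0 < B := Bpos (n-1) (by omega)
  have hpolar2 : (∫ z : EuclideanSpace ℝ (Fin (n-1)), (1 - ‖z‖^2)/(1+‖z‖^2)^((n:ℝ)-1))
      = ((n-1:ℕ):ℝ) * V * J := by
    rw [hpolar, hrad, nsmul_eq_mul, smul_eq_mul, hV, measureReal_def]; ring
  have hvol : ∀ m k : ℕ, m = k →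
      (volume (ball (0 : EuclideanSpace ℝ (Fin m)) 1)).toReal
        = (volume (ball (0 : EuclideanSpace ℝ (Fin k)) 1)).toReal := by
    rintro m k rfl; rfl
  have hsv : sphereVol (n-2) = ((n:ℝ)-1) * V := by
    unfold sphereVol
    rw [hvol (n-2+1) (n-1) (by omega), ← hV]
    congr 1
    rw [Nat.cast_sub (by omega)]; ring
  have hX : (∫ z : EuclideanSpace ℝ (Fin (n - 1)),
        (fderiv ℝ (bubbleTrace n) z z + ((n : ℝ) - 2) / 2 * bubbleTrace n z) *
          bubbleTrace n z) = -((n:ℝ)-2) * V * B := by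
    rw [hfun, integral_const_mul, hpolar2, hNat]
    rw [hNat] at hftc
    calc ((n:ℝ)-2)/2 * (((n:ℝ)-1) * V * J)
        = ((n:ℝ)-2)/2 * V * (((n:ℝ)-1)*J) := by ring
      _ = ((n:ℝ)-2)/2 * V * (-2*B) := by rw [hftc]
      _ = -((n:ℝ)-2)*V*B := by ring
  refine ⟨?_, ?_, ?_, ?_⟩
  · rw [hfun]; exact hint2.const_mul _
  · rw [hfun, integral_const_mul]
  · rw [hX, hpI, hsv]
    have hN1 : ((n:ℝ)-1) ≠ 0 := by linarith
    field_simp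
  · rw [hX]
    have h2 : (0:ℝ) < (n:ℝ) - 2 := by linarith
    have := mul_pos (mul_pos h2 hVpos) hBpos
    linarith
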